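/- Let 0 < α < 1 and L > 0. There exists a constant c₁ > 0, depending only on α and L (in particular independent of N), such that for every integer N ≥ 2, with mesh size h = L/N, and every nonzero grid function v one has (δ^α_{x,+} v, v) = (δ^α_{x,-} v, v) > c₁ · ln 2 · ‖v‖². -/

import Mathlib

open Finset

/-- The coefficients `g_k^{(γ)}`: `g_0 = 1`, `g_k = (1 - (γ+1)/k) g_{k-1}` for `k ≥ 1`. -/
noncomputable def gcoef (γ : ℝ) : ℕ → ℝ
  | 0 => 1
  | k + 1 => (1 - (γ + 1) / (k + 1)) * gcoef γ k

/-- The coefficients `ω_k^{(γ)}`: `ω_0 = (γ/2) g_0` and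
`ω_k = (γ/2) g_k + ((2-γ)/2) g_{k-1}` for `k ≥ 1`. -/
noncomputable def wcoef (γ : ℝ) : ℕ → ℝ
  | 0 => γ / 2 * gcoef γ 0
  | k + 1 => γ / 2 * gcoef γ (k + 1) + (2 - γ) / 2 * gcoef γ k

/-- Discrete inner product `(u,v) = h ∑_{i=1}^{N-1} u_i v_i`. -/
noncomputable def ip (N : ℕ) (h : ℝ) (u v : ℕ → ℝ) : ℝ :=
  h * ∑ i ∈ Finset.Icc 1 (N - 1), u i * v i

/-- Discrete `L₂`-norm `‖v‖ = √(v,v)`. -/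
noncomputable def gnorm (N : ℕ) (h : ℝ) (v : ℕ → ℝ) : ℝ :=
  Real.sqrt (ip N h v v)

/-- `(δ^γ_{x,+} v)_i = h^{-γ} ∑_{k=0}^{i+1} ω_k^{(γ)} v_{i-k+1}`. -/
noncomputable def dplus (γ : ℝ) (h : ℝ) (v : ℕ → ℝ) (i : ℕ) : ℝ :=
  h ^ (-γ) * ∑ k ∈ Finset.range (i + 2), wcoef γ k * v (i + 1 - k)

/-- `(δ^γ_{x,-} v)_i = h^{-γ} ∑_{k=0}^{N-i+1} ω_k^{(γ)} v_{i+k-1}`. -/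
noncomputable def dminus (γ : ℝ) (N : ℕ) (h : ℝ) (v : ℕ → ℝ) (i : ℕ) : ℝ :=
  h ^ (-γ) * ∑ k ∈ Finset.range (N - i + 2), wcoef γ k * v (i + k - 1)

noncomputable def Pprod (α : ℝ) (m : ℕ) : ℝ := ∏ k ∈ Icc 1 m, (1 - α / k)

noncomputable def Osum (α : ℝ) (m : ℕ) : ℝ := ∑ k ∈ range (m + 1), wcoef α k

lemma Pprod_zero (α : ℝ) : Pprod α 0 = 1 := by simp [Pprod]

lemma Pprod_one (α : ℝ) : Pprod α 1 = 1 - α := by simp [Pprod]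

lemma Pprod_succ (α : ℝ) (m : ℕ) :
    Pprod α (m + 1) = Pprod α m * (1 - α / (m + 1)) := by
  rw [Pprod, Pprod, prod_Icc_succ_top (by omega)]
  push_cast
  ring_nf

lemma Pprod_pos {α : ℝ} (hα0 : 0 ≤ α) (hα1 : α < 1) (m : ℕ) : 0 < Pprod α m := by
  apply prod_pos
  intro k hk
  simp only [mem_Icc] at hk
  have hk1 : (1 : ℝ) ≤ (k : ℝ) := by exact_mod_cast hk.1
  have h : α / k ≤ α := by
    rw [div_le_iff₀ (by linarith)]
    nlinarith
  linarith

lemma gcoef_succ (α : ℝ) (m : ℕ) :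
    gcoef α (m + 1) = -(α / (m + 1)) * Pprod α m := by
  induction m with
  | zero => norm_num [gcoef, Pprod_zero]
  | succ n ih =>
      rw [show gcoef α (n + 1 + 1) = (1 - (α + 1) / ((n:ℝ) + 1 + 1)) * gcoef α (n + 1) by
        simp [gcoef], ih, Pprod_succ]
      have h1 : ((n : ℝ) + 1) ≠ 0 := by positivity
      have h2 : ((n : ℝ) + 1 + 1) ≠ 0 := by positivity
      push_cast
      field_simp
      ring

lemma Pprod_add_g (α : ℝ) (m : ℕ) :
    Pprod α (m + 1) = Pprod α m + gcoef α (m + 1) := by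
  rw [Pprod_succ, gcoef_succ]; ring

lemma gcoef_succ_nonpos {α : ℝ} (hα0 : 0 ≤ α) (hα1 : α < 1) (m : ℕ) :
    gcoef α (m + 1) ≤ 0 := by
  rw [gcoef_succ]
  have := Pprod_pos hα0 hα1 m
  have : 0 ≤ α / ((m : ℝ) + 1) := by positivity
  nlinarith [Pprod_pos hα0 hα1 m]

lemma Pprod_anti {α : ℝ} (hα0 : 0 ≤ α) (hα1 : α < 1) :
    ∀ m n : ℕ, m ≤ n → Pprod α n ≤ Pprod α m := by
  intro m n hmn
  induction n with
  | zero => simp_all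
  | succ k ih =>
      rcases Nat.lt_or_ge m (k + 1) with h | h
      · have h1 := ih (by omega)
        have h2 := Pprod_add_g α k
        have := gcoef_succ_nonpos hα0 hα1 k
        linarith
      · have : m = k + 1 := by omega
        subst this; rfl

lemma wcoef_zero (α : ℝ) : wcoef α 0 = α / 2 := by simp [wcoef, gcoef]

lemma wcoef_one (α : ℝ) : wcoef α 1 = (2 - α - α ^ 2) / 2 := by
  simp [wcoef, gcoef]; ring

lemma wcoef_one_nonneg {α : ℝ} (hα0 : 0 ≤ α) (hα1 : α < 1) : 0 ≤ wcoef α 1 := by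
  rw [wcoef_one]; nlinarith

lemma wcoef_two_add_nonpos {α : ℝ} (hα0 : 0 ≤ α) (hα1 : α < 1) (k : ℕ) :
    wcoef α (k + 2) ≤ 0 := by
  have h : wcoef α (k + 2) = α / 2 * gcoef α (k + 2) + (2 - α) / 2 * gcoef α (k + 1) := rfl
  rw [h]
  have h1 := gcoef_succ_nonpos hα0 hα1 (k + 1)
  have h2 := gcoef_succ_nonpos hα0 hα1 k
  nlinarith

lemma wcoef_02_nonpos {α : ℝ} (hα0 : 0 ≤ α) (hα1 : α < 1) :
    wcoef α 0 + wcoef α 2 ≤ 0 := by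
  have h2 : wcoef α 2 = α / 2 * gcoef α 2 + (2 - α) / 2 * gcoef α 1 := rfl
  have hg1 : gcoef α 1 = -α := by norm_num [gcoef]
  have hg2 : gcoef α 2 = α * (α - 1) / 2 := by
    have : gcoef α 2 = (1 - (α + 1) / ((1:ℝ) + 1)) * gcoef α 1 := by simp [gcoef]
    rw [this, hg1]; ring
  rw [wcoef_zero, h2, hg2, hg1]
  nlinarith [mul_nonneg (mul_nonneg hα0 (by linarith : (0:ℝ) ≤ 1 - α))
    (by linarith : (0:ℝ) ≤ 2 + α)]

lemma Osum_eq (α : ℝ) (m : ℕ) :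
    Osum α (m + 1) = α / 2 * Pprod α (m + 1) + (2 - α) / 2 * Pprod α m := by
  induction m with
  | zero =>
      have : Osum α 1 = wcoef α 0 + wcoef α 1 := by
        simp [Osum, Finset.sum_range_succ]
      rw [this, wcoef_zero, wcoef_one, Pprod_one, Pprod_zero]; ring
  | succ n ih =>
      have hs : Osum α (n + 2) = Osum α (n + 1) + wcoef α (n + 2) := by
        simp [Osum, Finset.sum_range_succ]
      have hw : wcoef α (n + 2) = α / 2 * gcoef α (n + 2) + (2 - α) / 2 * gcoef α (n + 1) := rfl
      rw [hs, ih, hw, Pprod_add_g α (n + 1), Pprod_add_g α n]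
      ring

lemma Osum_ge {α : ℝ} (hα0 : 0 ≤ α) (hα1 : α < 1) (m : ℕ) :
    Pprod α (m + 1) ≤ Osum α (m + 1) := by
  rw [Osum_eq]
  have h1 := Pprod_anti hα0 hα1 m (m + 1) (by omega)
  nlinarith [Pprod_pos hα0 hα1 m]

lemma Pprod_lower {α : ℝ} (hα0 : 0 < α) (hα1 : α < 1) :
    ∀ m : ℕ, 1 ≤ m → (1 - α) * (m : ℝ) ^ (-α) ≤ Pprod α m := by
  intro m hm
  induction m, hm using Nat.le_induction with
  | base => rw [Nat.cast_one, Real.one_rpow, Pprod_one, mul_one]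
  | succ m hm ih =>
      set M : ℝ := (m : ℝ) with hMdef
      have hM : (1 : ℝ) ≤ M := by rw [hMdef]; exact_mod_cast hm
      have hM0 : (0 : ℝ) < M := by linarith
      have hM1 : (0 : ℝ) < M + 1 := by linarith
      have key : (M / (M + 1)) ^ α ≤ 1 - α / (M + 1) := by
        have h := Real.geom_mean_le_arith_mean2_weighted hα0.le
          (by linarith : (0:ℝ) ≤ 1 - α) (by positivity : (0:ℝ) ≤ M / (M+1))
          zero_le_one (by ring)
        rw [Real.one_rpow, mul_one] at h
        calc (M / (M + 1)) ^ α ≤ α * (M / (M + 1)) + (1 - α) * 1 := h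
          _ = 1 - α / (M + 1) := by field_simp; ring
      have h1 : M ^ α ≠ 0 := (Real.rpow_pos_of_pos hM0 α).ne'
      have h2 : (M + 1) ^ α ≠ 0 := (Real.rpow_pos_of_pos hM1 α).ne'
      have hsplit : (M + 1) ^ (-α) = M ^ (-α) * (M / (M + 1)) ^ α := by
        rw [Real.div_rpow hM0.le hM1.le, Real.rpow_neg hM0.le, Real.rpow_neg hM1.le]
        field_simp
      have hfac : (0 : ℝ) ≤ 1 - α / (M + 1) := by
        have : α / (M + 1) ≤ α := by
          rw [div_le_iff₀ hM1]; nlinarith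
        linarith
      have cast1 : ((m + 1 : ℕ) : ℝ) = M + 1 := by push_cast; rfl
      rw [cast1, Pprod_succ, ← hMdef]
      calc (1 - α) * (M + 1) ^ (-α)
          = (1 - α) * M ^ (-α) * (M / (M + 1)) ^ α := by rw [hsplit]; ring
        _ ≤ (1 - α) * M ^ (-α) * (1 - α / (M + 1)) := by
            exact mul_le_mul_of_nonneg_left key (mul_nonneg (by linarith) (Real.rpow_pos_of_pos hM0 (-α)).le)
        _ ≤ Pprod α m * (1 - α / (M + 1)) := mul_le_mul_of_nonneg_right ih hfac

noncomputable def Wmat (α : ℝ) (i j : ℕ) : ℝ :=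
  if j ≤ i + 1 then wcoef α (i + 1 - j) else 0

lemma inner_plus {α : ℝ} {N : ℕ} (hN : 2 ≤ N) {v : ℕ → ℝ} (hv0 : v 0 = 0) (hvN : v N = 0)
    {i : ℕ} (hi : i ∈ Icc 1 (N - 1)) :
    ∑ k ∈ range (i + 2), wcoef α k * v (i + 1 - k)
      = ∑ j ∈ Icc 1 (N - 1), Wmat α i j * v j := by
  simp only [mem_Icc] at hi
  have step1 : ∑ k ∈ range (i + 2), wcoef α k * v (i + 1 - k)
      = ∑ j ∈ range (i + 2), Wmat α i j * v j := by
    rw [← Finset.sum_range_reflect (fun j => Wmat α i j * v j) (i + 2)]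
    apply Finset.sum_congr rfl
    intro k hk
    simp only [mem_range] at hk
    have h1 : i + 2 - 1 - k = i + 1 - k := by omega
    rw [h1]
    unfold Wmat
    rw [if_pos (by omega)]
    have h2 : i + 1 - (i + 1 - k) = k := by omega
    rw [h2]
  rw [step1]
  have step2 : ∑ j ∈ range (i + 2), Wmat α i j * v j
      = ∑ j ∈ range (N + 1), Wmat α i j * v j := by
    apply Finset.sum_subset
    · intro x hx; simp only [mem_range] at *; omega
    · intro x hx hx2
      simp only [mem_range] at hx hx2
      unfold Wmat
      rw [if_neg (by omega), zero_mul]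
  rw [step2]
  symm
  apply Finset.sum_subset
  · intro x hx; simp only [mem_Icc, mem_range] at *; omega
  · intro x hx hx2
    simp only [mem_Icc, mem_range] at hx hx2
    have : x = 0 ∨ x = N := by omega
    rcases this with h | h <;> subst h <;> simp [hv0, hvN]

lemma inner_minus {α : ℝ} {N : ℕ} (hN : 2 ≤ N) {v : ℕ → ℝ} (hv0 : v 0 = 0) (hvN : v N = 0)
    {i : ℕ} (hi : i ∈ Icc 1 (N - 1)) :
    ∑ k ∈ range (N - i + 2), wcoef α k * v (i + k - 1)
      = ∑ j ∈ Icc 1 (N - 1), Wmat α j i * v j := by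
  simp only [mem_Icc] at hi
  have step1 : ∑ k ∈ range (N - i + 2), wcoef α k * v (i + k - 1)
      = ∑ j ∈ Icc (i - 1) N, Wmat α j i * v j := by
    apply Finset.sum_nbij' (i := fun k => i + k - 1) (j := fun j => j + 1 - i)
    · intro k hk; simp only [mem_range, mem_Icc] at *; omega
    · intro j hj; simp only [mem_range, mem_Icc] at *; omega
    · intro k hk; simp only [mem_range] at hk; omega
    · intro j hj; simp only [mem_Icc] at hj; omega
    · intro k hk
      simp only [mem_range] at hk
      unfold Wmat
      rw [if_pos (by omega)]
      have h2 : i + k - 1 + 1 - i = k := by omega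
      rw [h2]
  rw [step1]
  have step2 : ∑ j ∈ Icc (i - 1) N, Wmat α j i * v j
      = ∑ j ∈ range (N + 1), Wmat α j i * v j := by
    apply Finset.sum_subset
    · intro x hx; simp only [mem_Icc, mem_range] at *; omega
    · intro x hx hx2
      simp only [mem_Icc, mem_range] at hx hx2
      unfold Wmat
      rw [if_neg (by omega), zero_mul]
  rw [step2]
  symm
  apply Finset.sum_subset
  · intro x hx; simp only [mem_Icc, mem_range] at *; omega
  · intro x hx hx2
    simp only [mem_Icc, mem_range] at hx hx2
    have : x = 0 ∨ x = N := by omega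
    rcases this with h | h <;> subst h <;> simp [hv0, hvN]

lemma sum_Icc_w (α : ℝ) {N : ℕ} (hN : 1 ≤ N) :
    ∑ k ∈ Icc 1 (N - 1), wcoef α k = Osum α (N - 1) - wcoef α 0 := by
  have h1 : range (N - 1 + 1) = insert 0 (Icc 1 (N - 1)) := by
    ext x; simp only [mem_range, mem_insert, mem_Icc]; omega
  have h2 : (0 : ℕ) ∉ Icc 1 (N - 1) := by simp
  rw [Osum, h1, Finset.sum_insert h2]
  ring

lemma rowA_mid {α : ℝ} {N i : ℕ} (hi1 : 1 ≤ i) (hi2 : i ≤ N - 2) (hN : 2 ≤ N) :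
    ∑ j ∈ Icc 1 (N - 1), Wmat α i j = Osum α i := by
  have step1 : ∑ j ∈ Icc 1 (N - 1), Wmat α i j = ∑ j ∈ Icc 1 (i + 1), Wmat α i j := by
    symm
    apply Finset.sum_subset
    · intro x hx; simp only [mem_Icc] at *; omega
    · intro x hx hx2
      simp only [mem_Icc] at hx hx2
      unfold Wmat
      rw [if_neg (by omega)]
  rw [step1, Osum]
  apply Finset.sum_nbij' (i := fun j => i + 1 - j) (j := fun k => i + 1 - k)
  · intro j hj; simp only [mem_Icc, mem_range] at *; omega
  · intro k hk; simp only [mem_Icc, mem_range] at *; omega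
  · intro j hj; simp only [mem_Icc] at hj; omega
  · intro k hk; simp only [mem_range] at hk; omega
  · intro j hj
    simp only [mem_Icc] at hj
    unfold Wmat
    rw [if_pos (by omega)]

lemma rowA_top {α : ℝ} {N : ℕ} (hN : 2 ≤ N) :
    ∑ j ∈ Icc 1 (N - 1), Wmat α (N - 1) j = ∑ k ∈ Icc 1 (N - 1), wcoef α k := by
  apply Finset.sum_nbij' (i := fun j => N - j) (j := fun k => N - k)
  · intro j hj; simp only [mem_Icc] at *; omega
  · intro k hk; simp only [mem_Icc] at *; omega
  · intro j hj; simp only [mem_Icc] at hj; omega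
  · intro k hk; simp only [mem_Icc] at hk; omega
  · intro j hj
    simp only [mem_Icc] at hj
    unfold Wmat
    rw [if_pos (by omega)]
    congr 1
    omega

lemma colB_mid {α : ℝ} {N i : ℕ} (hi1 : 2 ≤ i) (hi2 : i ≤ N - 1) (hN : 2 ≤ N) :
    ∑ j ∈ Icc 1 (N - 1), Wmat α j i = Osum α (N - i) := by
  have step1 : ∑ j ∈ Icc 1 (N - 1), Wmat α j i = ∑ j ∈ Icc (i - 1) (N - 1), Wmat α j i := by
    symm
    apply Finset.sum_subset
    · intro x hx; simp only [mem_Icc] at *; omega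
    · intro x hx hx2
      simp only [mem_Icc] at hx hx2
      unfold Wmat
      rw [if_neg (by omega)]
  rw [step1, Osum]
  apply Finset.sum_nbij' (i := fun j => j + 1 - i) (j := fun k => i + k - 1)
  · intro j hj; simp only [mem_Icc, mem_range] at *; omega
  · intro k hk; simp only [mem_Icc, mem_range] at *; omega
  · intro j hj; simp only [mem_Icc] at hj; omega
  · intro k hk; simp only [mem_range] at hk; omega
  · intro j hj
    simp only [mem_Icc] at hj
    unfold Wmat
    rw [if_pos (by omega)]

lemma colB_one {α : ℝ} {N : ℕ} (hN : 2 ≤ N) :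
    ∑ j ∈ Icc 1 (N - 1), Wmat α j 1 = ∑ k ∈ Icc 1 (N - 1), wcoef α k := by
  apply Finset.sum_congr rfl
  intro j hj
  simp only [mem_Icc] at hj
  unfold Wmat
  rw [if_pos (by omega)]
  norm_num

lemma Osum_ge' {α : ℝ} (hα0 : 0 ≤ α) (hα1 : α < 1) {m : ℕ} (hm : 1 ≤ m) :
    Pprod α m ≤ Osum α m := by
  cases m with
  | zero => omega
  | succ n => exact Osum_ge hα0 hα1 n

lemma Osum_one (α : ℝ) : Osum α 1 = wcoef α 0 + wcoef α 1 := by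
  simp [Osum, Finset.sum_range_succ]

lemma row_bound {α : ℝ} (hα0 : 0 < α) (hα1 : α < 1) {N i : ℕ} (hN : 2 ≤ N)
    (hi : i ∈ Icc 1 (N - 1)) :
    (1 - α) * Pprod α (N - 1) ≤ ∑ j ∈ Icc 1 (N - 1), (Wmat α i j + Wmat α j i) := by
  simp only [mem_Icc] at hi
  rw [Finset.sum_add_distrib]
  have hP : 0 < Pprod α (N - 1) := Pprod_pos hα0.le hα1 _
  have hw0 : wcoef α 0 = α / 2 := wcoef_zero α
  have hw1 : 0 ≤ wcoef α 1 := wcoef_one_nonneg hα0.le hα1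
  rcases eq_or_lt_of_le hN with hN2 | hN3
  · -- N = 2, so i = 1 = N - 1
    have hN2' : N = 2 := hN2.symm
    subst hN2'
    have hi1 : i = 1 := by omega
    subst hi1
    have hA : ∑ j ∈ Icc 1 (2 - 1), Wmat α 1 j = ∑ k ∈ Icc 1 (2 - 1), wcoef α k :=
      rowA_top (by omega)
    have hB := colB_one (α := α) (N := 2) (by omega)
    rw [hA, hB]
    have : ∑ k ∈ Icc 1 (2 - 1), wcoef α k = wcoef α 1 := by simp
    rw [this, Pprod_one, wcoef_one]
    nlinarith
  · -- N ≥ 3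
    have hN3' : 3 ≤ N := hN3
    have hOP : Pprod α (N - 1) ≤ Osum α (N - 1) := Osum_ge' hα0.le hα1 (by omega)
    rcases eq_or_lt_of_le hi.1 with h1 | h1'
    · -- i = 1
      have hi1 : i = 1 := h1.symm
      subst hi1
      have hA : ∑ j ∈ Icc 1 (N - 1), Wmat α 1 j = Osum α 1 :=
        rowA_mid (by omega) (by omega) hN
      have hB := colB_one (α := α) (N := N) hN
      rw [hA, hB, sum_Icc_w α (by omega), Osum_one, hw0]
      nlinarith
    · rcases eq_or_lt_of_le hi.2 with h2 | h2'
      · -- i = N - 1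
        have hi2 : i = N - 1 := h2
        subst hi2
        have hA := rowA_top (α := α) hN
        have hB : ∑ j ∈ Icc 1 (N - 1), Wmat α j (N - 1) = Osum α (N - (N - 1)) :=
          colB_mid (by omega) (by omega) hN
        have hNN : N - (N - 1) = 1 := by omega
        rw [hA, hB, hNN, sum_Icc_w α (by omega), Osum_one, hw0]
        nlinarith
      · -- 2 ≤ i ≤ N - 2
        have hA : ∑ j ∈ Icc 1 (N - 1), Wmat α i j = Osum α i :=
          rowA_mid (by omega) (by omega) hN
        have hB : ∑ j ∈ Icc 1 (N - 1), Wmat α j i = Osum α (N - i) :=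
          colB_mid (by omega) (by omega) hN
        have hPA : Pprod α (N - 1) ≤ Osum α i :=
          le_trans (Pprod_anti hα0.le hα1 i (N - 1) (by omega)) (Osum_ge' hα0.le hα1 (by omega))
        have hPB : Pprod α (N - 1) ≤ Osum α (N - i) :=
          le_trans (Pprod_anti hα0.le hα1 (N - i) (N - 1) (by omega)) (Osum_ge' hα0.le hα1 (by omega))
        rw [hA, hB]
        nlinarith

lemma s_nonpos {α : ℝ} (hα0 : 0 < α) (hα1 : α < 1) {i j : ℕ} (hij : i ≠ j) :
    Wmat α i j + Wmat α j i ≤ 0 := by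
  have key : ∀ a b : ℕ, a < b → Wmat α a b + Wmat α b a ≤ 0 := by
    intro a b hab
    have hba : Wmat α b a = wcoef α (b + 1 - a) := by
      unfold Wmat; rw [if_pos (by omega)]
    rcases eq_or_lt_of_le (Nat.succ_le_of_lt hab) with h | h
    · -- b = a + 1
      have hb : b = a + 1 := h.symm
      subst hb
      have hab' : Wmat α a (a + 1) = wcoef α 0 := by
        unfold Wmat; rw [if_pos (by omega)]
        congr 1; omega
      have h2 : a + 1 + 1 - a = 2 := by omega
      rw [hab', hba, h2]
      exact wcoef_02_nonpos hα0.le hα1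
    · -- b ≥ a + 2
      have hab' : Wmat α a b = 0 := by
        unfold Wmat; rw [if_neg (by omega)]
      have h2 : b + 1 - a = (b - a - 1) + 2 := by omega
      rw [hab', hba, h2, zero_add]
      exact wcoef_two_add_nonpos hα0.le hα1 _
  rcases Nat.lt_or_ge i j with h | h
  · exact key i j h
  · have h' : j < i := by omega
    have := key j i h'
    linarith

lemma quad_lower {α : ℝ} (hα0 : 0 < α) (hα1 : α < 1) {N : ℕ} (hN : 2 ≤ N) (v : ℕ → ℝ) :
    (1 - α) * Pprod α (N - 1) * ∑ i ∈ Icc 1 (N - 1), (v i) ^ 2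
      ≤ 2 * ∑ i ∈ Icc 1 (N - 1), (∑ j ∈ Icc 1 (N - 1), Wmat α i j * v j) * v i := by
  set I := Icc 1 (N - 1) with hI
  have hS : ∑ i ∈ I, (∑ j ∈ I, Wmat α i j * v j) * v i
      = ∑ i ∈ I, ∑ j ∈ I, Wmat α i j * v j * v i :=
    Finset.sum_congr rfl fun i _ => Finset.sum_mul _ _ _
  have hswap : ∑ i ∈ I, ∑ j ∈ I, Wmat α i j * v j * v i
      = ∑ i ∈ I, ∑ j ∈ I, Wmat α j i * v i * v j := Finset.sum_comm
  have h2S : 2 * ∑ i ∈ I, ∑ j ∈ I, Wmat α i j * v j * v i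
      = ∑ i ∈ I, ∑ j ∈ I, (Wmat α i j + Wmat α j i) * (v i * v j) := by
    rw [two_mul]
    nth_rewrite 2 [hswap]
    rw [← Finset.sum_add_distrib]
    refine Finset.sum_congr rfl fun i _ => ?_
    rw [← Finset.sum_add_distrib]
    exact Finset.sum_congr rfl fun j _ => by ring
  have hT21 : ∑ i ∈ I, ∑ j ∈ I, (Wmat α i j + Wmat α j i) * (v j) ^ 2
      = ∑ i ∈ I, ∑ j ∈ I, (Wmat α i j + Wmat α j i) * (v i) ^ 2 := by
    rw [Finset.sum_comm]
    refine Finset.sum_congr rfl fun i _ => ?_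
    exact Finset.sum_congr rfl fun j _ => by ring
  have hT3 : ∑ i ∈ I, ∑ j ∈ I, (Wmat α i j + Wmat α j i) * (v i - v j) ^ 2 ≤ 0 := by
    apply Finset.sum_nonpos; intro i _
    apply Finset.sum_nonpos; intro j _
    rcases eq_or_ne i j with rfl | hij
    · simp
    · nlinarith [s_nonpos hα0 hα1 hij (α := α), sq_nonneg (v i - v j)]
  have hid : 2 * (∑ i ∈ I, ∑ j ∈ I, (Wmat α i j + Wmat α j i) * (v i * v j))
      = ∑ i ∈ I, ∑ j ∈ I, (Wmat α i j + Wmat α j i) * (v i) ^ 2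
        + ∑ i ∈ I, ∑ j ∈ I, (Wmat α i j + Wmat α j i) * (v j) ^ 2
        - ∑ i ∈ I, ∑ j ∈ I, (Wmat α i j + Wmat α j i) * (v i - v j) ^ 2 := by
    rw [Finset.mul_sum, ← Finset.sum_add_distrib, ← Finset.sum_sub_distrib]
    refine Finset.sum_congr rfl fun i _ => ?_
    rw [Finset.mul_sum, ← Finset.sum_add_distrib, ← Finset.sum_sub_distrib]
    exact Finset.sum_congr rfl fun j _ => by ring
  have hT1 : (1 - α) * Pprod α (N - 1) * ∑ i ∈ I, (v i) ^ 2
      ≤ ∑ i ∈ I, ∑ j ∈ I, (Wmat α i j + Wmat α j i) * (v i) ^ 2 := by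
    rw [Finset.mul_sum]
    apply Finset.sum_le_sum
    intro i hi
    have hrow := row_bound hα0 hα1 hN hi
    calc (1 - α) * Pprod α (N - 1) * (v i) ^ 2
        ≤ (∑ j ∈ I, (Wmat α i j + Wmat α j i)) * (v i) ^ 2 :=
          mul_le_mul_of_nonneg_right hrow (sq_nonneg _)
      _ = ∑ j ∈ I, (Wmat α i j + Wmat α j i) * (v i) ^ 2 := Finset.sum_mul _ _ _
  rw [hS]
  linarith

theorem stmt12 (α L : ℝ) (hα0 : 0 < α) (hα1 : α < 1) (hL : 0 < L) :
    ∃ c₁ : ℝ, 0 < c₁ ∧ ∀ N : ℕ, 2 ≤ N → ∀ v : ℕ → ℝ,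
      v 0 = 0 → v N = 0 → (∃ i ≤ N, v i ≠ 0) →
      ip N (L / N) (dplus α (L / N) v) v = ip N (L / N) (dminus α N (L / N) v) v ∧
      c₁ * Real.log 2 * (gnorm N (L / N) v) ^ 2 < ip N (L / N) (dplus α (L / N) v) v := by
  have hlog2 : 0 < Real.log 2 := Real.log_pos one_lt_two
  have hLα : 0 < L ^ α := Real.rpow_pos_of_pos hL α
  refine ⟨(1 - α) ^ 2 / (4 * L ^ α * Real.log 2), div_pos (by nlinarith) (by positivity), ?_⟩
  intro N hN v hv0 hvN hvne
  set c₁ : ℝ := (1 - α) ^ 2 / (4 * L ^ α * Real.log 2) with hc₁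
  set h : ℝ := L / (N : ℝ) with hhdef
  have hNpos : (0 : ℝ) < N := by
    have : (2 : ℝ) ≤ (N : ℝ) := by exact_mod_cast hN
    linarith
  have hhpos : 0 < h := by rw [hhdef]; positivity
  set I := Finset.Icc 1 (N - 1) with hI
  set X : ℝ := h ^ (-α) with hX
  have hXpos : 0 < X := Real.rpow_pos_of_pos hhpos _
  set S : ℝ := ∑ i ∈ I, (∑ j ∈ I, Wmat α i j * v j) * v i with hS
  -- rewrite the two inner products
  have hplus : ip N h (dplus α h v) v = h * (X * S) := by
    rw [hS]
    unfold ip dplus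
    congr 1
    rw [Finset.mul_sum]
    apply Finset.sum_congr rfl
    intro i hi
    rw [inner_plus hN hv0 hvN hi, hX]
    ring
  have hminus : ip N h (dminus α N h v) v
      = h * (X * ∑ i ∈ I, (∑ j ∈ I, Wmat α j i * v j) * v i) := by
    unfold ip dminus
    congr 1
    rw [Finset.mul_sum]
    apply Finset.sum_congr rfl
    intro i hi
    rw [inner_minus hN hv0 hvN hi, hX]
    ring
  have htrans : ∑ i ∈ I, (∑ j ∈ I, Wmat α j i * v j) * v i = S := by
    rw [hS]
    have e1 : ∑ i ∈ I, (∑ j ∈ I, Wmat α j i * v j) * v i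
        = ∑ i ∈ I, ∑ j ∈ I, Wmat α j i * v j * v i :=
      Finset.sum_congr rfl fun i _ => Finset.sum_mul _ _ _
    have e2 : ∑ i ∈ I, ∑ j ∈ I, Wmat α j i * v j * v i
        = ∑ i ∈ I, ∑ j ∈ I, Wmat α i j * v i * v j := Finset.sum_comm
    have e3 : ∑ i ∈ I, (∑ j ∈ I, Wmat α i j * v j) * v i
        = ∑ i ∈ I, ∑ j ∈ I, Wmat α i j * v i * v j := by
      rw [Finset.sum_congr rfl fun i (_ : i ∈ I) => Finset.sum_mul _ _ (v i)]
      exact Finset.sum_congr rfl fun i _ => Finset.sum_congr rfl fun j _ => by ring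
    rw [e1, e2, ← e3]
  constructor
  · rw [hplus, hminus, htrans]
  -- the strict lower bound
  set E : ℝ := ∑ i ∈ I, (v i) ^ 2 with hE
  have hEpos : 0 < E := by
    obtain ⟨i0, hi0N, hi0⟩ := hvne
    have hi0mem : i0 ∈ I := by
      rw [hI, Finset.mem_Icc]
      constructor
      · rcases Nat.eq_zero_or_pos i0 with h0 | h0
        · exfalso; rw [h0] at hi0; exact hi0 hv0
        · omega
      · rcases eq_or_lt_of_le hi0N with hh | hh
        · exfalso; rw [hh] at hi0; exact hi0 hvN
        · omega
    have h1 : 0 < (v i0) ^ 2 := by positivity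
    have h2 : (v i0) ^ 2 ≤ E :=
      Finset.single_le_sum (fun i _ => sq_nonneg (v i)) hi0mem
    linarith
  have hquad : (1 - α) * Pprod α (N - 1) * E ≤ 2 * S := quad_lower hα0 hα1 hN v
  -- numeric bounds
  set P : ℝ := Pprod α (N - 1) with hP
  have hPl : (1 - α) * ((N - 1 : ℕ) : ℝ) ^ (-α) ≤ P := Pprod_lower hα0 hα1 (N - 1) (by omega)
  have hcastpos : (0 : ℝ) < ((N - 1 : ℕ) : ℝ) := by
    have : 1 ≤ N - 1 := by omega
    exact_mod_cast Nat.lt_of_lt_of_le Nat.zero_lt_one this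
  have hNN : (N : ℝ) ^ (-α) ≤ ((N - 1 : ℕ) : ℝ) ^ (-α) := by
    apply Real.rpow_le_rpow_of_nonpos hcastpos
    · exact_mod_cast Nat.sub_le N 1
    · linarith
  have hP2 : (1 - α) * (N : ℝ) ^ (-α) ≤ P := by
    refine le_trans ?_ hPl
    exact mul_le_mul_of_nonneg_left hNN (by linarith)
  have hXN : X * (N : ℝ) ^ (-α) = L ^ (-α) := by
    rw [hX, hhdef, ← Real.mul_rpow (div_nonneg hL.le hNpos.le) hNpos.le]
    congr 1
    field_simp
  have step : (1 - α) ^ 2 * L ^ (-α) ≤ (1 - α) * X * P := by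
    calc (1 - α) ^ 2 * L ^ (-α) = (1 - α) * X * ((1 - α) * (N : ℝ) ^ (-α)) := by
          rw [← hXN]; ring
      _ ≤ (1 - α) * X * P := by
          exact mul_le_mul_of_nonneg_left hP2
            (mul_nonneg (by linarith) hXpos.le)
  have key1 : (1 - α) ^ 2 * L ^ (-α) * E ≤ 2 * (X * S) := by
    calc (1 - α) ^ 2 * L ^ (-α) * E ≤ ((1 - α) * X * P) * E :=
          mul_le_mul_of_nonneg_right step hEpos.le
      _ = X * ((1 - α) * P * E) := by ring
      _ ≤ X * (2 * S) := mul_le_mul_of_nonneg_left hquad hXpos.le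
      _ = 2 * (X * S) := by ring
  have hLneg : L ^ (-α) = (L ^ α)⁻¹ := Real.rpow_neg hL.le α
  have hc : c₁ * Real.log 2 = (1 - α) ^ 2 / (4 * L ^ α) := by
    rw [hc₁]; field_simp
  have key2 : c₁ * Real.log 2 * E < (1 / 2) * ((1 - α) ^ 2 * L ^ (-α) * E) := by
    rw [hc, hLneg]
    have h1α : (0 : ℝ) < (1 - α) ^ 2 := by nlinarith
    have hsc : (1 - α) ^ 2 / (4 * L ^ α) < (1 / 2) * ((1 - α) ^ 2 * (L ^ α)⁻¹) := by
      have h2 : (1 / 2) * ((1 - α) ^ 2 * (L ^ α)⁻¹) * (4 * L ^ α) = 2 * (1 - α) ^ 2 := by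
        field_simp; ring
      rw [div_lt_iff₀ (by nlinarith : (0:ℝ) < 4 * L ^ α), h2]
      linarith
    calc (1 - α) ^ 2 / (4 * L ^ α) * E < (1 / 2) * ((1 - α) ^ 2 * (L ^ α)⁻¹) * E :=
          mul_lt_mul_of_pos_right hsc hEpos
      _ = 1 / 2 * ((1 - α) ^ 2 * (L ^ α)⁻¹ * E) := by ring
  have hfinal : c₁ * Real.log 2 * E < X * S := by linarith
  -- norm squared
  have hip : ip N h v v = h * E := by
    unfold ip
    rw [hE]
    congr 1
    exact Finset.sum_congr rfl fun i _ => (pow_two (v i)).symm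
  have hgnorm : (gnorm N h v) ^ 2 = h * E := by
    unfold gnorm
    rw [Real.sq_sqrt (by rw [hip]; exact mul_nonneg hhpos.le hEpos.le)]
    exact hip
  rw [hplus, hgnorm]
  calc c₁ * Real.log 2 * (h * E) = h * (c₁ * Real.log 2 * E) := by ring
    _ < h * (X * S) := by exact mul_lt_mul_of_pos_left hfinal hhpos
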